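/- With Γ(δ) defined as the block matrix with blocks ∫₀^δ A_sᵀ Q A_s ds, ∫₀^δ A_sᵀ Q B_s ds, ∫₀^δ B_sᵀ Q A_s ds, ∫₀^δ (B_sᵀ Q B_s + R) ds (A_s = e^{A s}, B_s = (∫₀^s e^{Aτ} dτ) B), if Q ≻ 0, R ≻ 0 and δ > 0, then Γ(δ) is symmetric positive definite. -/

import Mathlib

open Matrix MeasureTheory intervalIntegral

attribute [local instance] Matrix.normedAddCommGroup Matrix.normedSpace

/-- `A_s = e^{As}`. -/
noncomputable def Aexp {n : ℕ} (A : Matrix (Fin n) (Fin n) ℝ) (s : ℝ) :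
    Matrix (Fin n) (Fin n) ℝ := NormedSpace.exp (s • A)

/-- `B_s = (∫₀^s e^{Aτ} dτ) B`. -/
noncomputable def Bexp {n m : ℕ} (A : Matrix (Fin n) (Fin n) ℝ)
    (B : Matrix (Fin n) (Fin m) ℝ) (s : ℝ) : Matrix (Fin n) (Fin m) ℝ :=
  (∫ τ in (0:ℝ)..s, Aexp A τ) * B

/-- The block matrix `Γ(δ)` of the stage-cost quadratic form. -/
noncomputable def Gam {n m : ℕ} (A : Matrix (Fin n) (Fin n) ℝ)
    (B : Matrix (Fin n) (Fin m) ℝ) (Q : Matrix (Fin n) (Fin n) ℝ)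
    (R : Matrix (Fin m) (Fin m) ℝ) (δ : ℝ) :
    Matrix (Fin n ⊕ Fin m) (Fin n ⊕ Fin m) ℝ :=
  Matrix.fromBlocks
    (∫ s in (0:ℝ)..δ, (Aexp A s)ᵀ * Q * Aexp A s)
    (∫ s in (0:ℝ)..δ, (Aexp A s)ᵀ * Q * Bexp A B s)
    (∫ s in (0:ℝ)..δ, (Bexp A B s)ᵀ * Q * Aexp A s)
    (∫ s in (0:ℝ)..δ, ((Bexp A B s)ᵀ * Q * Bexp A B s + R))

section aux

lemma exp_cont {n : ℕ} :
    Continuous (fun M : Matrix (Fin n) (Fin n) ℝ => NormedSpace.exp M) := by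
  letI : NormedRing (Matrix (Fin n) (Fin n) ℝ) := Matrix.linftyOpNormedRing
  letI : NormedAlgebra ℝ (Matrix (Fin n) (Fin n) ℝ) := Matrix.linftyOpNormedAlgebra
  letI : NormedAlgebra ℚ (Matrix (Fin n) (Fin n) ℝ) := NormedAlgebra.restrictScalars ℚ ℝ _
  exact @NormedSpace.exp_continuous _ _ _ (FiniteDimensional.complete ℝ _)

lemma cont_Aexp {n : ℕ} (A : Matrix (Fin n) (Fin n) ℝ) : Continuous (Aexp A) :=
  exp_cont.comp (continuous_id.smul continuous_const)

lemma cont_Bexp {n m : ℕ} (A : Matrix (Fin n) (Fin n) ℝ)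
    (B : Matrix (Fin n) (Fin m) ℝ) : Continuous (Bexp A B) := by
  have h : Continuous (fun s : ℝ => ∫ τ in (0:ℝ)..s, Aexp A τ) :=
    intervalIntegral.continuous_primitive
      (fun a b => ((cont_Aexp A).intervalIntegrable a b)) 0
  exact h.matrix_mul continuous_const

/-- The quadratic-form continuous linear map `M ↦ x ⬝ᵥ M *ᵥ y`. -/
noncomputable def qf {a b : ℕ} (x : Fin a → ℝ) (y : Fin b → ℝ) :
    Matrix (Fin a) (Fin b) ℝ →L[ℝ] ℝ :=
  LinearMap.toContinuousLinearMap
    { toFun := fun M => x ⬝ᵥ M *ᵥ y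
      map_add' := fun M N => by simp [Matrix.add_mulVec, dotProduct_add]
      map_smul' := fun c M => by simp [Matrix.smul_mulVec, dotProduct_smul] }

@[simp] lemma qf_apply {a b : ℕ} (x : Fin a → ℝ) (y : Fin b → ℝ)
    (M : Matrix (Fin a) (Fin b) ℝ) : qf x y M = x ⬝ᵥ M *ᵥ y := rfl

lemma qf_integral {a b : ℕ} (x : Fin a → ℝ) (y : Fin b → ℝ)
    {f : ℝ → Matrix (Fin a) (Fin b) ℝ} {c d : ℝ}
    (hf : @IntervalIntegrable _ _ NormedAddGroup.toENormedAddMonoid f volume c d) :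
    x ⬝ᵥ (∫ s in c..d, f s) *ᵥ y = ∫ s in c..d, x ⬝ᵥ f s *ᵥ y := by
  have := (qf x y).intervalIntegral_comp_comm hf
  exact this.symm

/-- The transpose continuous linear map. -/
noncomputable def tCLM (a b : ℕ) :
    Matrix (Fin a) (Fin b) ℝ →L[ℝ] Matrix (Fin b) (Fin a) ℝ :=
  LinearMap.toContinuousLinearMap
    (Matrix.transposeLinearEquiv (Fin a) (Fin b) ℝ ℝ).toLinearMap

@[simp] lemma tCLM_apply {a b : ℕ} (M : Matrix (Fin a) (Fin b) ℝ) :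
    tCLM a b M = Mᵀ := rfl

lemma transpose_integral {a b : ℕ}
    {f : ℝ → Matrix (Fin a) (Fin b) ℝ} {c d : ℝ}
    (hf : @IntervalIntegrable _ _ NormedAddGroup.toENormedAddMonoid f volume c d) :
    (∫ s in c..d, f s)ᵀ = ∫ s in c..d, (f s)ᵀ := by
  have := (tCLM a b).intervalIntegral_comp_comm hf
  exact this.symm

lemma quad_eq {a b c : ℕ} (M : Matrix (Fin c) (Fin a) ℝ)
    (Q : Matrix (Fin c) (Fin c) ℝ) (N : Matrix (Fin c) (Fin b) ℝ)
    (x : Fin a → ℝ) (y : Fin b → ℝ) :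
    x ⬝ᵥ (Mᵀ * Q * N) *ᵥ y = (M *ᵥ x) ⬝ᵥ Q *ᵥ (N *ᵥ y) := by
  rw [← Matrix.mulVec_mulVec, ← Matrix.mulVec_mulVec, Matrix.dotProduct_mulVec x,
    Matrix.vecMul_transpose]

end aux

/-- If `Q ≻ 0`, `R ≻ 0` and `δ > 0`, then `Γ(δ)` is (symmetric) positive
definite. -/
theorem stmt2 {n m : ℕ} (A : Matrix (Fin n) (Fin n) ℝ)
    (B : Matrix (Fin n) (Fin m) ℝ)
    (Q : Matrix (Fin n) (Fin n) ℝ) (R : Matrix (Fin m) (Fin m) ℝ)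
    (hQ : Q.PosDef) (hR : R.PosDef) (δ : ℝ) (hδ : 0 < δ) :
    (Gam A B Q R δ).PosDef := by
  have hQs : Qᵀ = Q := hQ.1
  have hRs : Rᵀ = R := hR.1
  have hcA := cont_Aexp A
  have hcB := cont_Bexp A B
  -- continuity of the four matrix-valued integrands
  have h11 : Continuous fun s => (Aexp A s)ᵀ * Q * Aexp A s :=
    ((hcA.matrix_transpose.matrix_mul continuous_const).matrix_mul hcA)
  have h12 : Continuous fun s => (Aexp A s)ᵀ * Q * Bexp A B s :=
    ((hcA.matrix_transpose.matrix_mul continuous_const).matrix_mul hcB)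
  have h21 : Continuous fun s => (Bexp A B s)ᵀ * Q * Aexp A s :=
    ((hcB.matrix_transpose.matrix_mul continuous_const).matrix_mul hcA)
  have h22 : Continuous fun s => (Bexp A B s)ᵀ * Q * Bexp A B s + R :=
    (((hcB.matrix_transpose.matrix_mul continuous_const).matrix_mul hcB).add
      continuous_const)
  rw [Matrix.posDef_iff_dotProduct_mulVec]
  constructor
  · -- symmetry
    rw [Matrix.IsHermitian, Gam, Matrix.fromBlocks_conjTranspose]
    simp only [Matrix.conjTranspose_eq_transpose_of_trivial]
    rw [transpose_integral (h11.intervalIntegrable 0 δ),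
      transpose_integral (h12.intervalIntegrable 0 δ),
      transpose_integral (h21.intervalIntegrable 0 δ),
      transpose_integral (h22.intervalIntegrable 0 δ)]
    simp only [Matrix.transpose_mul, Matrix.transpose_transpose,
      Matrix.transpose_add, hQs, hRs, Matrix.mul_assoc]
  · intro x hx
    set x₀ : Fin n → ℝ := x ∘ Sum.inl with hx₀
    set u₀ : Fin m → ℝ := x ∘ Sum.inr with hu₀
    have hxe : x = Sum.elim x₀ u₀ := by
      funext i; cases i <;> rfl
    -- the scalar integrand
    set f : ℝ → ℝ := fun s =>
      (Aexp A s *ᵥ x₀ + Bexp A B s *ᵥ u₀) ⬝ᵥ Q *ᵥ (Aexp A s *ᵥ x₀ + Bexp A B s *ᵥ u₀)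
        + u₀ ⬝ᵥ R *ᵥ u₀ with hf
    have hfc : Continuous f := by
      apply Continuous.add _ continuous_const
      have hv : Continuous fun s => Aexp A s *ᵥ x₀ + Bexp A B s *ᵥ u₀ :=
        (hcA.matrix_mulVec continuous_const).add (hcB.matrix_mulVec continuous_const)
      exact hv.dotProduct ((continuous_const.matrix_mulVec hv))
    -- the quadratic form equals the integral of f
    have key : x ⬝ᵥ (Gam A B Q R δ) *ᵥ x = ∫ s in (0:ℝ)..δ, f s := by
      rw [hxe, Gam, Matrix.fromBlocks_mulVec, Matrix.dotProduct_block]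
      simp only [Sum.elim_comp_inl, Sum.elim_comp_inr]
      rw [dotProduct_add, dotProduct_add,
        qf_integral x₀ x₀ (h11.intervalIntegrable 0 δ),
        qf_integral x₀ u₀ (h12.intervalIntegrable 0 δ),
        qf_integral u₀ x₀ (h21.intervalIntegrable 0 δ),
        qf_integral u₀ u₀ (h22.intervalIntegrable 0 δ)]
      have c11s : Continuous fun s => x₀ ⬝ᵥ ((Aexp A s)ᵀ * Q * Aexp A s) *ᵥ x₀ := by
        exact (qf x₀ x₀).continuous.comp h11
      have c12s : Continuous fun s => x₀ ⬝ᵥ ((Aexp A s)ᵀ * Q * Bexp A B s) *ᵥ u₀ := by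
        exact (qf x₀ u₀).continuous.comp h12
      have c21s : Continuous fun s => u₀ ⬝ᵥ ((Bexp A B s)ᵀ * Q * Aexp A s) *ᵥ x₀ := by
        exact (qf u₀ x₀).continuous.comp h21
      have c22s : Continuous fun s => u₀ ⬝ᵥ ((Bexp A B s)ᵀ * Q * Bexp A B s + R) *ᵥ u₀ := by
        exact (qf u₀ u₀).continuous.comp h22
      rw [← intervalIntegral.integral_add (c11s.intervalIntegrable 0 δ)
            (c12s.intervalIntegrable 0 δ),
          ← intervalIntegral.integral_add (c21s.intervalIntegrable 0 δ)
            (c22s.intervalIntegrable 0 δ),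
          ← intervalIntegral.integral_add ((c11s.intervalIntegrable 0 δ).add (c12s.intervalIntegrable 0 δ))
            ((c21s.intervalIntegrable 0 δ).add (c22s.intervalIntegrable 0 δ))]
      refine intervalIntegral.integral_congr fun s _ => ?_
      simp only [hf]
      rw [quad_eq, quad_eq, quad_eq, Matrix.add_mulVec, dotProduct_add]
      rw [quad_eq]
      simp only [Matrix.mulVec_add, dotProduct_add, add_dotProduct]
      ring
    -- nonnegativity of f
    have hfnn : ∀ s, 0 ≤ f s := by
      intro s
      have h1 := hQ.posSemidef.dotProduct_mulVec_nonneg (Aexp A s *ᵥ x₀ + Bexp A B s *ᵥ u₀)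
      have h2 := hR.posSemidef.dotProduct_mulVec_nonneg u₀
      rw [star_trivial] at h1 h2
      exact add_nonneg h1 h2
    -- positivity at 0
    have hA0 : Aexp A 0 = 1 := by
      rw [Aexp, zero_smul]
      letI : NormedRing (Matrix (Fin n) (Fin n) ℝ) := Matrix.linftyOpNormedRing
      letI : NormedAlgebra ℝ (Matrix (Fin n) (Fin n) ℝ) := Matrix.linftyOpNormedAlgebra
      exact NormedSpace.exp_zero
    have hB0 : Bexp A B 0 = 0 := by
      rw [Bexp, intervalIntegral.integral_same, Matrix.zero_mul]
    have hf0 : 0 < f 0 := by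
      have hQ2 := hQ.posSemidef.dotProduct_mulVec_nonneg x₀
      have hR2 := hR.posSemidef.dotProduct_mulVec_nonneg u₀
      rw [star_trivial] at hQ2 hR2
      have hne : x₀ ≠ 0 ∨ u₀ ≠ 0 := by
        by_contra h
        push_neg at h
        apply hx
        rw [hxe, h.1, h.2]
        funext i; cases i <;> rfl
      simp only [hf, hA0, hB0, Matrix.one_mulVec, Matrix.zero_mulVec, add_zero]
      rcases hne with h | h
      · have := hQ.dotProduct_mulVec_pos h
        rw [star_trivial] at this
        linarith
      · have := hR.dotProduct_mulVec_pos h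
        rw [star_trivial] at this
        linarith
    -- strict positivity of the integral
    have hpos : 0 < ∫ s in (0:ℝ)..δ, f s := by
      have hopen : IsOpen {s : ℝ | 0 < f s} := isOpen_lt continuous_const hfc
      obtain ⟨ε, hε, hball⟩ := Metric.isOpen_iff.mp hopen 0 hf0
      set c := min (ε / 2) δ with hc
      have hc0 : 0 < c := lt_min (by linarith) hδ
      have hcδ : c ≤ δ := min_le_right _ _
      have hsplit : (∫ s in (0:ℝ)..δ, f s)
          = (∫ s in (0:ℝ)..c, f s) + ∫ s in c..δ, f s :=
        (intervalIntegral.integral_add_adjacent_intervals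
          (hfc.intervalIntegrable 0 c) (hfc.intervalIntegrable c δ)).symm
      have h1 : 0 < ∫ s in (0:ℝ)..c, f s := by
        refine intervalIntegral.intervalIntegral_pos_of_pos_on
          (hfc.intervalIntegrable 0 c) (fun s hs => ?_) hc0
        apply hball
        simp only [Metric.mem_ball, Real.dist_eq, sub_zero]
        rw [abs_of_pos hs.1]
        calc s < c := hs.2
          _ ≤ ε / 2 := min_le_left _ _
          _ < ε := by linarith
      have h2 : 0 ≤ ∫ s in c..δ, f s :=
        intervalIntegral.integral_nonneg hcδ (fun s _ => hfnn s)
      rw [hsplit]; linarith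
    rw [star_trivial, key]
    exact hpos
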